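/- Let a > 0, c > 0 and fix p > 0. Define f(B) = B·ln(1 + a·p/B) − B·ln(1 + c/B) for B > 0. Then f''(B) = −(a·p)²/(B·(B + a·p)²) + c²/(B·(B + c)²) for every B > 0; consequently, if a·p < c then f is strictly convex on (0, ∞), and if a·p > c then f is strictly concave on (0, ∞). -/

import Mathlib

open Real

lemma g_hasDerivAt (t B : ℝ) (ht : 0 < t) (hB : 0 < B) :
    HasDerivAt (fun B : ℝ => B * Real.log (1 + t / B))
      (Real.log (1 + t / B) - t / (B + t)) B := by
  have hBne : B ≠ 0 := hB.ne'
  have hpos : 0 < 1 + t / B := by positivity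
  have h1 : HasDerivAt (fun B : ℝ => 1 + t / B) (-t / B ^ 2) B := by
    simpa using (((hasDerivAt_const B t).div (hasDerivAt_id B) hBne).const_add 1)
  have h2 : HasDerivAt (fun B : ℝ => Real.log (1 + t / B))
      ((-t / B ^ 2) / (1 + t / B)) B := h1.log hpos.ne'
  have h3 : HasDerivAt (fun B : ℝ => B * Real.log (1 + t / B))
      (1 * Real.log (1 + t / B) + B * ((-t / B ^ 2) / (1 + t / B))) B :=
    (hasDerivAt_id B).mul h2
  convert h3 using 1
  field_simp
  ring

lemma g'_hasDerivAt (t B : ℝ) (ht : 0 < t) (hB : 0 < B) :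
    HasDerivAt (fun B : ℝ => Real.log (1 + t / B) - t / (B + t))
      (-(t ^ 2) / (B * (B + t) ^ 2)) B := by
  have hBne : B ≠ 0 := hB.ne'
  have hBt : B + t ≠ 0 := by positivity
  have hpos : 0 < 1 + t / B := by positivity
  have h1 : HasDerivAt (fun B : ℝ => 1 + t / B) (-t / B ^ 2) B := by
    simpa using (((hasDerivAt_const B t).div (hasDerivAt_id B) hBne).const_add 1)
  have h2 : HasDerivAt (fun B : ℝ => Real.log (1 + t / B))
      ((-t / B ^ 2) / (1 + t / B)) B := h1.log hpos.ne'
  have h3 : HasDerivAt (fun B : ℝ => t / (B + t)) (-t / (B + t) ^ 2) B := by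
    have : HasDerivAt (fun B : ℝ => t / (B + t)) ((0 * (B + t) - t * 1) / (B + t) ^ 2) B :=
      (hasDerivAt_const B t).div ((hasDerivAt_id B).add_const t) hBt
    convert this using 1
    ring
  have h4 : HasDerivAt (fun B : ℝ => Real.log (1 + t / B) - t / (B + t))
      ((-t / B ^ 2) / (1 + t / B) - -t / (B + t) ^ 2) B := h2.sub h3
  convert h4 using 1
  field_simp
  ring

lemma f_deriv_eq (a c p : ℝ) (ha : 0 < a) (hc : 0 < c) (hp : 0 < p) :
    ∀ B ∈ Set.Ioi (0 : ℝ),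
      deriv (fun B : ℝ => B * Real.log (1 + a * p / B) - B * Real.log (1 + c / B)) B
        = (Real.log (1 + a * p / B) - a * p / (B + a * p))
          - (Real.log (1 + c / B) - c / (B + c)) := by
  intro B hB
  have hap : 0 < a * p := mul_pos ha hp
  exact ((g_hasDerivAt (a * p) B hap hB).sub (g_hasDerivAt c B hc hB)).deriv

lemma f_deriv2_eq (a c p : ℝ) (ha : 0 < a) (hc : 0 < c) (hp : 0 < p) :
    ∀ B ∈ Set.Ioi (0 : ℝ),
      deriv (deriv (fun B : ℝ => B * Real.log (1 + a * p / B) - B * Real.log (1 + c / B))) B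
        = -(a * p) ^ 2 / (B * (B + a * p) ^ 2) + c ^ 2 / (B * (B + c) ^ 2) := by
  intro B hB
  have hap : 0 < a * p := mul_pos ha hp
  have hEq : deriv (fun B : ℝ => B * Real.log (1 + a * p / B) - B * Real.log (1 + c / B))
      =ᶠ[nhds B] fun B =>
        (Real.log (1 + a * p / B) - a * p / (B + a * p))
          - (Real.log (1 + c / B) - c / (B + c)) := by
    filter_upwards [isOpen_Ioi.mem_nhds hB] with x hx
    exact f_deriv_eq a c p ha hc hp x hx
  rw [hEq.deriv_eq]
  have h := ((g'_hasDerivAt (a * p) B hap hB).sub (g'_hasDerivAt c B hc hB)).deriv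
  exact h.trans (by ring)

theorem secrecy_rate_second_deriv_in_B (a c p : ℝ) (ha : 0 < a) (hc : 0 < c) (hp : 0 < p) :
    (∀ B : ℝ, 0 < B →
      deriv (deriv (fun B : ℝ => B * Real.log (1 + a * p / B) - B * Real.log (1 + c / B))) B
        = -(a * p) ^ 2 / (B * (B + a * p) ^ 2) + c ^ 2 / (B * (B + c) ^ 2)) ∧
    (a * p < c →
      StrictConvexOn ℝ (Set.Ioi (0 : ℝ))
        (fun B : ℝ => B * Real.log (1 + a * p / B) - B * Real.log (1 + c / B))) ∧
    (a * p > c →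
      StrictConcaveOn ℝ (Set.Ioi (0 : ℝ))
        (fun B : ℝ => B * Real.log (1 + a * p / B) - B * Real.log (1 + c / B))) := by
  have hap : 0 < a * p := mul_pos ha hp
  have hcont : ContinuousOn
      (fun B : ℝ => B * Real.log (1 + a * p / B) - B * Real.log (1 + c / B))
      (Set.Ioi (0 : ℝ)) := by
    intro B hB
    exact (((g_hasDerivAt (a * p) B hap hB).sub
      (g_hasDerivAt c B hc hB)).differentiableAt.continuousAt).continuousWithinAt
  have hineq : ∀ t s B : ℝ, 0 < t → 0 < s → t < s → 0 < B →
      0 < -(t : ℝ) ^ 2 / (B * (B + t) ^ 2) + s ^ 2 / (B * (B + s) ^ 2) := by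
    intro t s B ht hs hts hB
    have key : -(t : ℝ) ^ 2 / (B * (B + t) ^ 2) + s ^ 2 / (B * (B + s) ^ 2)
        = (s - t) * (B * (s + t) + 2 * s * t)
            / ((B + s) ^ 2 * (B + t) ^ 2) := by
      field_simp
      ring
    rw [key]
    have hst : 0 < s - t := by linarith
    positivity
  refine ⟨fun B hB => f_deriv2_eq a c p ha hc hp B hB, ?_, ?_⟩
  · intro hlt
    apply strictConvexOn_of_deriv2_pos (convex_Ioi 0) hcont
    intro B hB
    rw [interior_Ioi] at hB
    show 0 < deriv (deriv _) B
    rw [f_deriv2_eq a c p ha hc hp B hB]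
    exact hineq (a * p) c B hap hc hlt hB
  · intro hgt
    apply strictConcaveOn_of_deriv2_neg (convex_Ioi 0) hcont
    intro B hB
    rw [interior_Ioi] at hB
    show deriv (deriv _) B < 0
    rw [f_deriv2_eq a c p ha hc hp B hB]
    have := hineq c (a * p) B hc hap hgt hB
    rw [neg_div] at this
    rw [neg_div]
    linarith
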